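/- Let T > 0, α ∈ (0,2), 𝔠_p > 0, 𝔪_p > 0, x₀ ∈ ℝ, ε ∈ (0,α) and 𝔠_b > 0. Let p : (0,T] × ℝ → [0,∞) be measurable with p(s,x) ≤ 𝔠_p [ s^{-1/2} exp(−𝔪_p (x−x₀)²/s) + s/(s^{1/2} + |x−x₀|)^{1+α} ] for all s ∈ (0,T] and x ∈ ℝ, and let b : ℝ → ℝ be measurable with |b(x)| ≤ 𝔠_b (1 + |x|)^{(α−ε)/4} for every x ∈ ℝ. Then ∫_ℝ b(x)⁴ f_T(x) dx < ∞, i.e. the function (s,x) ↦ b(x)⁴ p(s,x) is integrable on (0,T] × ℝ. -/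

import Mathlib

open MeasureTheory

private lemma texp_le_one' {t : ℝ} (ht : 0 ≤ t) : t * Real.exp (-t) ≤ 1 := by
  have h1 : t ≤ Real.exp t := by linarith [Real.add_one_le_exp t]
  calc t * Real.exp (-t) ≤ Real.exp t * Real.exp (-t) :=
        mul_le_mul_of_nonneg_right h1 (Real.exp_nonneg _)
    _ = 1 := by rw [← Real.exp_add]; simp

private lemma gauss_ptwise' (m s y : ℝ) (hm : 0 < m) (hs : 0 < s) :
    (1 + y ^ 2) * Real.exp (-(m * y ^ 2) / s) ≤
      (1 + 2 * s / m) * Real.exp (-(m / (2 * s)) * y ^ 2) := by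
  set t := m / (2 * s) * y ^ 2 with ht
  have ht0 : 0 ≤ t := by positivity
  have hE1 : Real.exp (-(m * y ^ 2) / s) = Real.exp (-t) * Real.exp (-t) := by
    rw [← Real.exp_add]; congr 1; rw [ht]; field_simp; ring
  have hE : Real.exp (-t) ≤ 1 := by
    simpa using Real.exp_le_exp.2 (neg_nonpos.2 ht0)
  have hy2 : y ^ 2 * Real.exp (-t) ≤ 2 * s / m := by
    have hy : y ^ 2 = (2 * s / m) * t := by rw [ht]; field_simp
    calc y ^ 2 * Real.exp (-t) = (2 * s / m) * (t * Real.exp (-t)) := by rw [hy]; ring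
      _ ≤ (2 * s / m) * 1 := by
          apply mul_le_mul_of_nonneg_left (texp_le_one' ht0) (by positivity)
      _ = 2 * s / m := mul_one _
  have hEpos : (0:ℝ) ≤ Real.exp (-t) := Real.exp_nonneg _
  calc (1 + y ^ 2) * Real.exp (-(m * y ^ 2) / s)
      = (Real.exp (-t) + y ^ 2 * Real.exp (-t)) * Real.exp (-t) := by rw [hE1]; ring
    _ ≤ (1 + 2 * s / m) * Real.exp (-t) := by
        apply mul_le_mul_of_nonneg_right _ hEpos
        linarith
    _ = (1 + 2 * s / m) * Real.exp (-(m / (2 * s)) * y ^ 2) := by rw [ht]; ring_nf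

private lemma tail_ptwise' (T α ε s u : ℝ) (hα2 : α < 2) (hε0 : 0 < ε)
    (hεα : ε < α) (hs0 : 0 < s) (hsT : s ≤ T) (hu : 0 ≤ u) :
    (1 + u) ^ (α - ε) * (s / (s ^ ((1:ℝ)/2) + u) ^ (1 + α)) ≤
      (4 * T + 4 * s ^ (-(1:ℝ)/2)) * (1 + u) ^ (-(1 + ε)) := by
  set c := s ^ ((1:ℝ)/2) with hc
  set d := s ^ (-(1:ℝ)/2) with hd
  have hc0 : 0 < c := Real.rpow_pos_of_pos hs0 _
  have hd0 : 0 < d := Real.rpow_pos_of_pos hs0 _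
  have hcd : c * d = 1 := by rw [hc, hd, ← Real.rpow_add hs0]; norm_num
  have h1u : (0:ℝ) < 1 + u := by linarith
  have hcu : (0:ℝ) < c + u := by linarith
  have key : 1 + u ≤ (1 + d) * (c + u) := by nlinarith [mul_nonneg hd0.le hu]
  have h2 : (1 + u) ^ (α - ε) ≤ (1 + d) ^ (α - ε) * (c + u) ^ (α - ε) := by
    rw [← Real.mul_rpow (by positivity) hcu.le]
    exact Real.rpow_le_rpow h1u.le key (by linarith)
  have h3 : (c + u) ^ (-(1 + ε)) ≤ (1 + d) ^ (1 + ε) * (1 + u) ^ (-(1 + ε)) := by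
    have h3' : (1 + u) ^ (1 + ε) ≤ (1 + d) ^ (1 + ε) * (c + u) ^ (1 + ε) := by
      rw [← Real.mul_rpow (by positivity) hcu.le]
      exact Real.rpow_le_rpow h1u.le key (by linarith)
    have hA : (0:ℝ) < (c + u) ^ (1 + ε) := Real.rpow_pos_of_pos hcu _
    have hB : (0:ℝ) < (1 + u) ^ (1 + ε) := Real.rpow_pos_of_pos h1u _
    rw [Real.rpow_neg hcu.le, Real.rpow_neg h1u.le]
    rw [inv_le_iff_one_le_mul₀ hA]
    calc (1:ℝ) = ((1 + u) ^ (1 + ε))⁻¹ * (1 + u) ^ (1 + ε) := by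
          rw [inv_mul_cancel₀ hB.ne']
      _ ≤ ((1 + u) ^ (1 + ε))⁻¹ * ((1 + d) ^ (1 + ε) * (c + u) ^ (1 + ε)) := by
          apply mul_le_mul_of_nonneg_left h3' (by positivity)
      _ = (1 + d) ^ (1 + ε) * ((1 + u) ^ (1 + ε))⁻¹ * (c + u) ^ (1 + ε) := by ring
  have hdiv : s / (c + u) ^ (1 + α) = s * (c + u) ^ (-(1 + α)) := by
    rw [Real.rpow_neg hcu.le, div_eq_mul_inv]
  have hcomb : (c + u) ^ (α - ε) * (c + u) ^ (-(1 + α)) = (c + u) ^ (-(1 + ε)) := by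
    rw [← Real.rpow_add hcu]; congr 1; ring
  have hd3 : s * d ^ (3:ℕ) = d := by
    have h31 : d ^ (3:ℕ) = s ^ (-(3:ℝ)/2) := by
      rw [hd, ← Real.rpow_natCast (s ^ (-(1:ℝ)/2)) 3, ← Real.rpow_mul hs0.le]
      norm_num
    rw [h31]
    calc s * s ^ (-(3:ℝ)/2) = s ^ (1:ℝ) * s ^ (-(3:ℝ)/2) := by rw [Real.rpow_one]
      _ = s ^ (1 + -(3:ℝ)/2) := (Real.rpow_add hs0 _ _).symm
      _ = d := by rw [hd]; norm_num
  have h5 : s * (1 + d) ^ (1 + α) ≤ 4 * T + 4 * d := by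
    have h51 : (1 + d) ^ (1 + α) ≤ (1 + d) ^ ((3:ℕ):ℝ) :=
      Real.rpow_le_rpow_of_exponent_le (by linarith) (by push_cast; linarith)
    have h52 : (1 + d) ^ ((3:ℕ):ℝ) = (1 + d) ^ (3:ℕ) := Real.rpow_natCast _ 3
    have h53 : (1 + d) ^ (3:ℕ) ≤ 4 * (1 + d ^ (3:ℕ)) := by
      nlinarith [mul_nonneg (sq_nonneg (1 - d)) (by linarith : (0:ℝ) ≤ 1 + d)]
    calc s * (1 + d) ^ (1 + α) ≤ s * (4 * (1 + d ^ (3:ℕ))) :=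
          mul_le_mul_of_nonneg_left ((h51.trans_eq h52).trans h53) hs0.le
      _ = 4 * s + 4 * (s * d ^ (3:ℕ)) := by ring
      _ = 4 * s + 4 * d := by rw [hd3]
      _ ≤ 4 * T + 4 * d := by linarith
  have hup : (0:ℝ) < (1 + u) ^ (-(1 + ε)) := Real.rpow_pos_of_pos h1u _
  calc (1 + u) ^ (α - ε) * (s / (c + u) ^ (1 + α))
      = s * ((1 + u) ^ (α - ε) * (c + u) ^ (-(1 + α))) := by rw [hdiv]; ring
    _ ≤ s * ((1 + d) ^ (α - ε) * (c + u) ^ (α - ε) * (c + u) ^ (-(1 + α))) := by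
        apply mul_le_mul_of_nonneg_left _ hs0.le
        exact mul_le_mul_of_nonneg_right h2
          (le_of_lt (Real.rpow_pos_of_pos hcu (-(1 + α))))
    _ = s * (1 + d) ^ (α - ε) * (c + u) ^ (-(1 + ε)) := by rw [mul_assoc, hcomb]; ring
    _ ≤ s * (1 + d) ^ (α - ε) * ((1 + d) ^ (1 + ε) * (1 + u) ^ (-(1 + ε))) := by
        apply mul_le_mul_of_nonneg_left h3 (by positivity)
    _ = s * ((1 + d) ^ (α - ε) * (1 + d) ^ (1 + ε)) * (1 + u) ^ (-(1 + ε)) := by ring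
    _ = s * (1 + d) ^ (1 + α) * (1 + u) ^ (-(1 + ε)) := by
        rw [← Real.rpow_add (by linarith : (0:ℝ) < 1 + d),
          show (α - ε) + (1 + ε) = 1 + α by ring]
    _ ≤ (4 * T + 4 * d) * (1 + u) ^ (-(1 + ε)) :=
        mul_le_mul_of_nonneg_right h5 hup.le

/-- Under the Gaussian-plus-polynomial density bound with
`α ∈ (0,2)`, and for a measurable drift `b` with
`|b(x)| ≤ 𝔠_b (1 + |x|)^{(α−ε)/4}` (`ε ∈ (0,α)`), one has
`∫ b(x)⁴ f_T(x) dx < ∞`, i.e. `(s,x) ↦ b(x)⁴ p(s,x)` is integrable on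
`(0,T] × ℝ`, where `f_T(x) = (1/T) ∫₀ᵀ p(s,x) ds`. -/
theorem drift_fourth_moment_integrable (T α cp mp x₀ ε cb : ℝ) (hT : 0 < T)
    (hα0 : 0 < α) (hα2 : α < 2) (hcp : 0 < cp) (hmp : 0 < mp)
    (hε0 : 0 < ε) (hεα : ε < α) (hcb : 0 < cb)
    (p : ℝ → ℝ → ℝ) (hmeas : Measurable (Function.uncurry p))
    (hpos : ∀ s ∈ Set.Ioc (0:ℝ) T, ∀ x : ℝ, 0 ≤ p s x)
    (hbound : ∀ s ∈ Set.Ioc (0:ℝ) T, ∀ x : ℝ,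
      p s x ≤ cp * (s ^ (-(1:ℝ)/2) * Real.exp (-(mp * (x - x₀) ^ 2) / s)
        + s / (s ^ ((1:ℝ)/2) + |x - x₀|) ^ (1 + α)))
    (b : ℝ → ℝ) (hbmeas : Measurable b)
    (hb : ∀ x : ℝ, |b x| ≤ cb * (1 + |x|) ^ ((α - ε)/4)) :
    Integrable (fun x : ℝ =>
        b x ^ 4 * ((1 / T) * ∫ s in Set.Ioc (0:ℝ) T, p s x)) ∧
      IntegrableOn (fun q : ℝ × ℝ => b q.2 ^ 4 * p q.1 q.2)
        (Set.Ioc 0 T ×ˢ Set.univ) := by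
  set μ := (volume : Measure ℝ).restrict (Set.Ioc (0:ℝ) T) with hμ
  set K := cb ^ 4 * cp * (1 + |x₀|) ^ 2 with hKdef
  set CA := 2 + 4 * T / mp with hCAdef
  have hK0 : 0 ≤ K := by rw [hKdef]; positivity
  have hCA0 : 0 ≤ CA := by rw [hCAdef]; positivity
  -- the dominating functions
  set g1 : ℝ → ℝ → ℝ := fun s x =>
    (K * CA * s ^ (-(1:ℝ)/2)) * Real.exp (-(mp / (2 * s)) * (x - x₀) ^ 2) with hg1def
  set g2 : ℝ → ℝ → ℝ := fun s x =>
    (K * (4 * T + 4 * s ^ (-(1:ℝ)/2))) * (1 + |x - x₀|) ^ (-(1 + ε)) with hg2def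
  -- measurability
  have hFm : Measurable (fun q : ℝ × ℝ => b q.2 ^ 4 * p q.1 q.2) :=
    ((hbmeas.comp measurable_snd).pow_const 4).mul hmeas
  -- pointwise domination
  have hpt : ∀ s ∈ Set.Ioc (0:ℝ) T, ∀ x : ℝ,
      ‖b x ^ 4 * p s x‖ ≤ g1 s x + g2 s x := by
    intro s hs x
    have hs0 : 0 < s := hs.1
    have hp := hbound s hs x
    have hp0 := hpos s hs x
    have hb4 : (0:ℝ) ≤ b x ^ 4 := by positivity
    rw [Real.norm_eq_abs, abs_of_nonneg (mul_nonneg hb4 hp0)]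
    have hbx : b x ^ 4 ≤ cb ^ 4 * (1 + |x|) ^ (α - ε) := by
      have h0 : b x ^ 4 = |b x| ^ 4 := by rw [pow_abs, abs_of_nonneg hb4]
      calc b x ^ 4 = |b x| ^ 4 := h0
        _ ≤ (cb * (1 + |x|) ^ ((α - ε)/4)) ^ 4 :=
            pow_le_pow_left₀ (abs_nonneg _) (hb x) 4
        _ = cb ^ 4 * (1 + |x|) ^ (α - ε) := by
            rw [mul_pow, ← Real.rpow_natCast ((1 + |x|) ^ ((α - ε)/4)) 4,
              ← Real.rpow_mul (by positivity)]
            norm_num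
    have hx1 : (1 + |x|) ^ (α - ε) ≤ (1 + |x₀|) ^ 2 * (1 + |x - x₀|) ^ (α - ε) := by
      have hxx : 1 + |x| ≤ (1 + |x₀|) * (1 + |x - x₀|) := by
        have habs : |x| ≤ |x₀| + |x - x₀| := by
          calc |x| = |x₀ + (x - x₀)| := by ring_nf
            _ ≤ |x₀| + |x - x₀| := abs_add_le _ _
        nlinarith [abs_nonneg x₀, abs_nonneg (x - x₀),
          mul_nonneg (abs_nonneg x₀) (abs_nonneg (x - x₀))]
      calc (1 + |x|) ^ (α - ε)
          ≤ ((1 + |x₀|) * (1 + |x - x₀|)) ^ (α - ε) :=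
            Real.rpow_le_rpow (by positivity) hxx (by linarith)
        _ = (1 + |x₀|) ^ (α - ε) * (1 + |x - x₀|) ^ (α - ε) :=
            Real.mul_rpow (by positivity) (by positivity)
        _ ≤ (1 + |x₀|) ^ 2 * (1 + |x - x₀|) ^ (α - ε) := by
            apply mul_le_mul_of_nonneg_right _ (Real.rpow_nonneg (by positivity) _)
            calc (1 + |x₀|) ^ (α - ε) ≤ (1 + |x₀|) ^ ((2:ℕ):ℝ) :=
                  Real.rpow_le_rpow_of_exponent_le (by linarith [abs_nonneg x₀])
                    (by push_cast; linarith)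
              _ = (1 + |x₀|) ^ 2 := Real.rpow_natCast _ 2
    -- the Gaussian piece
    have hG : (1 + |x - x₀|) ^ (α - ε) *
        (s ^ (-(1:ℝ)/2) * Real.exp (-(mp * (x - x₀) ^ 2) / s))
        ≤ CA * s ^ (-(1:ℝ)/2) * Real.exp (-(mp / (2 * s)) * (x - x₀) ^ 2) := by
      have hd0 : (0:ℝ) < s ^ (-(1:ℝ)/2) := Real.rpow_pos_of_pos hs0 _
      have e1 : (1 + |x - x₀|) ^ (α - ε) ≤ 2 * (1 + (x - x₀) ^ 2) := by
        have e2 : (1 + |x - x₀|) ^ (α - ε) ≤ (1 + |x - x₀|) ^ ((2:ℕ):ℝ) :=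
          Real.rpow_le_rpow_of_exponent_le (by linarith [abs_nonneg (x - x₀)])
            (by push_cast; linarith)
        have e3 : (1 + |x - x₀|) ^ ((2:ℕ):ℝ) = (1 + |x - x₀|) ^ (2:ℕ) :=
          Real.rpow_natCast _ 2
        have e4 : (1 + |x - x₀|) ^ (2:ℕ) ≤ 2 * (1 + (x - x₀) ^ 2) := by
          have := sq_abs (x - x₀)
          nlinarith [abs_nonneg (x - x₀), sq_nonneg (1 - |x - x₀|)]
        linarith [e2.trans_eq e3]
      have hEpos : (0:ℝ) ≤ Real.exp (-(mp * (x - x₀) ^ 2) / s) := Real.exp_nonneg _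
      calc (1 + |x - x₀|) ^ (α - ε) *
            (s ^ (-(1:ℝ)/2) * Real.exp (-(mp * (x - x₀) ^ 2) / s))
          = s ^ (-(1:ℝ)/2) *
            ((1 + |x - x₀|) ^ (α - ε) * Real.exp (-(mp * (x - x₀) ^ 2) / s)) := by ring
        _ ≤ s ^ (-(1:ℝ)/2) *
            ((2 * (1 + (x - x₀) ^ 2)) * Real.exp (-(mp * (x - x₀) ^ 2) / s)) := by
            apply mul_le_mul_of_nonneg_left _ hd0.le
            exact mul_le_mul_of_nonneg_right e1 hEpos
        _ = s ^ (-(1:ℝ)/2) *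
            (2 * ((1 + (x - x₀) ^ 2) * Real.exp (-(mp * (x - x₀) ^ 2) / s))) := by ring
        _ ≤ s ^ (-(1:ℝ)/2) *
            (2 * ((1 + 2 * s / mp) * Real.exp (-(mp / (2 * s)) * (x - x₀) ^ 2))) := by
            apply mul_le_mul_of_nonneg_left _ hd0.le
            exact mul_le_mul_of_nonneg_left (gauss_ptwise' mp s (x - x₀) hmp hs0)
              (by norm_num)
        _ = (2 + 4 * s / mp) * s ^ (-(1:ℝ)/2) *
            Real.exp (-(mp / (2 * s)) * (x - x₀) ^ 2) := by ring
        _ ≤ CA * s ^ (-(1:ℝ)/2) * Real.exp (-(mp / (2 * s)) * (x - x₀) ^ 2) := by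
            apply mul_le_mul_of_nonneg_right _ (Real.exp_nonneg _)
            apply mul_le_mul_of_nonneg_right _ hd0.le
            rw [hCAdef]
            have hst : 4 * s / mp ≤ 4 * T / mp := by
              gcongr
              exact hs.2
            linarith [hst]
    -- combine everything
    have hL0 : 0 ≤ s / (s ^ ((1:ℝ)/2) + |x - x₀|) ^ (1 + α) :=
      div_nonneg hs0.le (Real.rpow_nonneg
        (add_nonneg (Real.rpow_nonneg hs0.le _) (abs_nonneg _)) _)
    have hG0 : (0:ℝ) ≤ s ^ (-(1:ℝ)/2) * Real.exp (-(mp * (x - x₀) ^ 2) / s) := by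
      positivity
    calc b x ^ 4 * p s x
        ≤ (cb ^ 4 * (1 + |x|) ^ (α - ε)) *
          (cp * (s ^ (-(1:ℝ)/2) * Real.exp (-(mp * (x - x₀) ^ 2) / s)
            + s / (s ^ ((1:ℝ)/2) + |x - x₀|) ^ (1 + α))) :=
          mul_le_mul hbx hp hp0 (by positivity)
      _ ≤ (cb ^ 4 * ((1 + |x₀|) ^ 2 * (1 + |x - x₀|) ^ (α - ε))) *
          (cp * (s ^ (-(1:ℝ)/2) * Real.exp (-(mp * (x - x₀) ^ 2) / s)
            + s / (s ^ ((1:ℝ)/2) + |x - x₀|) ^ (1 + α))) := by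
          apply mul_le_mul_of_nonneg_right _ (by positivity)
          exact mul_le_mul_of_nonneg_left hx1 (by positivity)
      _ = K * ((1 + |x - x₀|) ^ (α - ε) *
            (s ^ (-(1:ℝ)/2) * Real.exp (-(mp * (x - x₀) ^ 2) / s))
          + (1 + |x - x₀|) ^ (α - ε) *
            (s / (s ^ ((1:ℝ)/2) + |x - x₀|) ^ (1 + α))) := by
          rw [hKdef]; ring
      _ ≤ K * (CA * s ^ (-(1:ℝ)/2) * Real.exp (-(mp / (2 * s)) * (x - x₀) ^ 2)
          + (4 * T + 4 * s ^ (-(1:ℝ)/2)) * (1 + |x - x₀|) ^ (-(1 + ε))) := by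
          apply mul_le_mul_of_nonneg_left _ hK0
          exact add_le_add hG
            (tail_ptwise' T α ε s |x - x₀| hα2 hε0 hεα hs0 hs.2 (abs_nonneg _))
      _ = g1 s x + g2 s x := by simp only [hg1def, hg2def]; ring
  -- integrability of the dominating functions
  have hg1int : ∀ s : ℝ, 0 < s → Integrable (fun x => g1 s x) volume := by
    intro s hs0
    have h := (integrable_exp_neg_mul_sq
      (by positivity : (0:ℝ) < mp / (2 * s))).comp_sub_right x₀
    simpa only [hg1def] using h.const_mul (K * CA * s ^ (-(1:ℝ)/2))
  have hg2core : Integrable (fun x : ℝ => (1 + |x - x₀|) ^ (-(1 + ε))) volume := by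
    have h := (integrable_one_add_norm (E := ℝ) (μ := volume) (r := 1 + ε)
      (by simp; linarith)).comp_sub_right x₀
    simpa [Real.norm_eq_abs] using h
  have hg2int : ∀ s : ℝ, Integrable (fun x => g2 s x) volume := fun s => by
    simpa only [hg2def] using hg2core.const_mul (K * (4 * T + 4 * s ^ (-(1:ℝ)/2)))
  have hgint : ∀ s ∈ Set.Ioc (0:ℝ) T, Integrable (fun x => g1 s x + g2 s x) volume :=
    fun s hs => (hg1int s hs.1).add (hg2int s)
  have hFsm : ∀ s : ℝ, Measurable (fun x => b x ^ 4 * p s x) := fun s =>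
    (hbmeas.pow_const 4).mul (hmeas.comp (measurable_const.prodMk measurable_id))
  have hFint : ∀ s ∈ Set.Ioc (0:ℝ) T, Integrable (fun x => b x ^ 4 * p s x) volume :=
    fun s hs => (hgint s hs).mono' (hFsm s).aestronglyMeasurable
      (Filter.Eventually.of_forall (hpt s hs))
  -- the constant Cg
  set Cg := ∫ x : ℝ, (1 + |x - x₀|) ^ (-(1 + ε)) with hCgdef
  have hCg0 : 0 ≤ Cg := integral_nonneg fun x => Real.rpow_nonneg (by positivity) _
  -- integral of g1
  have hIg1 : ∀ s ∈ Set.Ioc (0:ℝ) T,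
      (∫ x, g1 s x) = K * CA * Real.sqrt (2 * Real.pi / mp) := by
    intro s hs
    have hs0 := hs.1
    have hgauss : (∫ x : ℝ, Real.exp (-(mp / (2 * s)) * (x - x₀) ^ 2))
        = Real.sqrt (Real.pi / (mp / (2 * s))) := by
      have h1 : (∫ x : ℝ, Real.exp (-(mp / (2 * s)) * (x - x₀) ^ 2))
          = ∫ x : ℝ, Real.exp (-(mp / (2 * s)) * x ^ 2) :=
        integral_sub_right_eq_self (fun x : ℝ => Real.exp (-(mp / (2 * s)) * x ^ 2)) x₀
      rw [h1]
      exact integral_gaussian _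
    have hsq : s ^ (-(1:ℝ)/2) * Real.sqrt s = 1 := by
      rw [Real.sqrt_eq_rpow, ← Real.rpow_add hs0]; norm_num
    calc (∫ x, g1 s x)
        = (K * CA * s ^ (-(1:ℝ)/2)) *
          ∫ x, Real.exp (-(mp / (2 * s)) * (x - x₀) ^ 2) := by
          simp only [hg1def]; exact integral_const_mul _ _
      _ = (K * CA * s ^ (-(1:ℝ)/2)) * Real.sqrt (Real.pi / (mp / (2 * s))) := by
          rw [hgauss]
      _ = K * CA * (s ^ (-(1:ℝ)/2) * Real.sqrt s) * Real.sqrt (2 * Real.pi / mp) := by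
          rw [show Real.pi / (mp / (2 * s)) = (2 * Real.pi / mp) * s by
            field_simp, Real.sqrt_mul (by positivity) s]
          ring
      _ = K * CA * Real.sqrt (2 * Real.pi / mp) := by rw [hsq]; ring
  have hIg2 : ∀ s : ℝ, (∫ x, g2 s x) = (K * (4 * T + 4 * s ^ (-(1:ℝ)/2))) * Cg := by
    intro s
    simp only [hg2def, hCgdef]
    exact integral_const_mul _ _
  set A0 := K * CA * Real.sqrt (2 * Real.pi / mp) + 4 * K * T * Cg with hA0def
  set A1 := 4 * K * Cg with hA1def
  have hIg : ∀ s ∈ Set.Ioc (0:ℝ) T,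
      (∫ x, (g1 s x + g2 s x)) ≤ A0 + A1 * s ^ (-(1:ℝ)/2) := by
    intro s hs
    rw [integral_add (hg1int s hs.1) (hg2int s), hIg1 s hs, hIg2 s]
    have h2 : (K * (4 * T + 4 * s ^ (-(1:ℝ)/2))) * Cg
        = 4 * K * T * Cg + (4 * K * Cg) * s ^ (-(1:ℝ)/2) := by ring
    simp only [hA0def, hA1def]
    linarith [h2]
  have hbnd_int : Integrable (fun s => A0 + A1 * s ^ (-(1:ℝ)/2)) μ := by
    apply Integrable.add
    · rw [hμ]
      exact integrableOn_const measure_Ioc_lt_top.ne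
    · have h1 : IntegrableOn (fun s : ℝ => s ^ (-(1:ℝ)/2)) (Set.Ioc 0 T) volume := by
        have h2 := intervalIntegral.intervalIntegrable_rpow'
          (a := 0) (b := T) (r := -(1:ℝ)/2) (by norm_num)
        rwa [intervalIntegrable_iff_integrableOn_Ioc_of_le hT.le] at h2
      rw [hμ]
      exact h1.const_mul A1
  have hInt1 : ∀ᵐ s ∂μ, Integrable (fun x => b x ^ 4 * p s x) volume := by
    rw [hμ, ae_restrict_iff' measurableSet_Ioc]
    exact Filter.Eventually.of_forall fun s hs => hFint s hs
  have hInt2 : Integrable (fun s => ∫ x, ‖b x ^ 4 * p s x‖) μ := by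
    apply hbnd_int.mono'
    · exact (hFm.norm.stronglyMeasurable.integral_prod_right').aestronglyMeasurable
    · rw [hμ]
      filter_upwards [ae_restrict_mem measurableSet_Ioc] with s hs
      rw [Real.norm_eq_abs, abs_of_nonneg (integral_nonneg fun x => norm_nonneg _)]
      calc (∫ x, ‖b x ^ 4 * p s x‖) ≤ ∫ x, (g1 s x + g2 s x) :=
            integral_mono (hFint s hs).norm (hgint s hs) (hpt s hs)
        _ ≤ A0 + A1 * s ^ (-(1:ℝ)/2) := hIg s hs
  have hprodInt : Integrable (fun q : ℝ × ℝ => b q.2 ^ 4 * p q.1 q.2)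
      (μ.prod volume) := by
    rw [integrable_prod_iff hFm.aestronglyMeasurable]
    exact ⟨hInt1, hInt2⟩
  have hμeq : μ.prod (volume : Measure ℝ)
      = (volume : Measure (ℝ × ℝ)).restrict (Set.Ioc 0 T ×ˢ Set.univ) := by
    rw [hμ, MeasureTheory.Measure.volume_eq_prod, ← Measure.prod_restrict,
      Measure.restrict_univ]
  constructor
  · have h3 := hprodInt.integral_prod_right
    have heq : (fun x : ℝ => b x ^ 4 * ((1 / T) * ∫ s, p s x ∂μ))
        = fun x => (1 / T) * ∫ s, b x ^ 4 * p s x ∂μ := by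
      funext x
      rw [MeasureTheory.integral_const_mul]
      ring
    rw [heq]
    exact h3.const_mul _
  · have h4 := hprodInt
    rwa [hμeq] at h4
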